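/- Let f : ℝ₊ → ℝ be bounded, continuous, and integrable on (0,∞), and define u(t,x) = ∫₀^∞ K(t,x,y) f(y) dy. Then for every fixed t > 0 and every integer m ≥ 0, the m-th spatial derivative decays at infinity: lim_{x→∞} ∂ₓᵐ u(t,x) = 0. -/

import Mathlib

open MeasureTheory Filter Set
open Topology

/-- `Φ(r) = e^{-r} + sin r - cos r`. -/
noncomputable def Phi (r : ℝ) : ℝ := Real.exp (-r) + Real.sin r - Real.cos r

noncomputable def PhiD (m : ℕ) (r : ℝ) : ℝ :=
  (-1)^m * Real.exp (-r) + Real.sin (r + m * (Real.pi/2)) - Real.cos (r + m * (Real.pi/2))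

lemma PhiD_zero (r : ℝ) : PhiD 0 r = Phi r := by
  simp [PhiD, Phi]

lemma hasDerivAt_PhiD (m : ℕ) (r : ℝ) : HasDerivAt (PhiD m) (PhiD (m+1) r) r := by
  have h1 : HasDerivAt (fun r : ℝ => (-1:ℝ)^m * Real.exp (-r))
      ((-1)^(m+1) * Real.exp (-r)) r := by
    have := ((Real.hasDerivAt_exp (-r)).comp r ((hasDerivAt_id r).neg)).const_mul ((-1:ℝ)^m)
    refine this.congr_deriv ?_
    ring
  have h2 : HasDerivAt (fun r : ℝ => Real.sin (r + m * (Real.pi/2)))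
      (Real.cos (r + m * (Real.pi/2))) r := by
    have := (Real.hasDerivAt_sin (r + m * (Real.pi/2))).comp r
      ((hasDerivAt_id r).add_const (m * (Real.pi/2)))
    exact this.congr_deriv (by simp)
  have h3 : HasDerivAt (fun r : ℝ => Real.cos (r + m * (Real.pi/2)))
      (-Real.sin (r + m * (Real.pi/2))) r := by
    have := (Real.hasDerivAt_cos (r + m * (Real.pi/2))).comp r
      ((hasDerivAt_id r).add_const (m * (Real.pi/2)))
    exact this.congr_deriv (by simp)
  have := (h1.add h2).sub h3
  refine HasDerivAt.congr_deriv this ?_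
  have hc : ((m:ℝ)+1) * (Real.pi/2) = (m * (Real.pi/2)) + Real.pi/2 := by ring
  unfold PhiD
  push_cast
  rw [hc, ← add_assoc r, Real.sin_add_pi_div_two, Real.cos_add_pi_div_two]

lemma abs_PhiD_le (m : ℕ) {r : ℝ} (hr : 0 ≤ r) : |PhiD m r| ≤ 3 := by
  have h1 : |(-1:ℝ)^m * Real.exp (-r)| ≤ 1 := by
    rw [abs_mul, abs_pow, abs_neg, abs_one, one_pow, one_mul,
      Real.abs_exp]
    exact Real.exp_le_one_iff.mpr (by linarith)
  have h2 := Real.abs_sin_le_one (r + m * (Real.pi/2))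
  have h3 := Real.abs_cos_le_one (r + m * (Real.pi/2))
  unfold PhiD
  calc |(-1)^m * Real.exp (-r) + Real.sin (r + m * (Real.pi/2)) - Real.cos (r + m * (Real.pi/2))|
      ≤ |(-1)^m * Real.exp (-r) + Real.sin (r + m * (Real.pi/2))| + |Real.cos (r + m * (Real.pi/2))| := abs_sub _ _
    _ ≤ |(-1)^m * Real.exp (-r)| + |Real.sin (r + m * (Real.pi/2))| + |Real.cos (r + m * (Real.pi/2))| := by
        gcongr; exact abs_add_le _ _
    _ ≤ 3 := by linarith

lemma abs_Phi_le {r : ℝ} (hr : 0 ≤ r) : |Phi r| ≤ 3 := by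
  rw [← PhiD_zero]; exact abs_PhiD_le 0 hr

lemma integrable_pow_exp {t : ℝ} (ht : 0 < t) (n : ℕ) :
    IntegrableOn (fun k : ℝ => k ^ n * Real.exp (-k ^ 4 * t)) (Ioi 0) := by
  have := integrableOn_rpow_mul_exp_neg_mul_rpow (p := 4) (s := n) (b := t)
    (neg_one_lt_zero.trans_le (Nat.cast_nonneg n)) (by norm_num) ht
  refine this.congr_fun (fun k hk => ?_) measurableSet_Ioi
  rw [mem_Ioi] at hk
  simp only [Real.rpow_natCast]
  congr 1
  rw [show ((4:ℝ)) = ((4:ℕ):ℝ) by norm_num, Real.rpow_natCast]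
  ring

lemma riemann_lebesgue (h : ℝ → ℝ) (hh : Integrable h (volume : Measure ℝ)) :
    Tendsto (fun x : ℝ => ∫ v, h v * Real.cos (v * x)) atTop (𝓝 0) ∧
    Tendsto (fun x : ℝ => ∫ v, h v * Real.sin (v * x)) atTop (𝓝 0) := by
  have hmap : Tendsto (fun x : ℝ => -x / (2 * Real.pi)) atTop (cocompact ℝ) := by
    rw [cocompact_eq_atBot_atTop]
    refine Tendsto.mono_right ?_ le_sup_left
    exact (tendsto_neg_atTop_atBot).atBot_div_const (by positivity)
  have T1 := (Real.tendsto_integral_exp_smul_cocompact (fun v : ℝ => (h v : ℂ))).comp hmap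
  have key : ∀ x v : ℝ, (Real.fourierChar (-(v * (-x / (2 * Real.pi))))) • ((h v : ℂ))
      = Complex.exp ((v * x : ℝ) * Complex.I) * (h v : ℂ) := by
    intro x v
    have h2 : 2 * Real.pi * (-(v * (-x / (2 * Real.pi)))) = v * x := by
      field_simp
    rw [Circle.smul_def, Real.fourierChar_apply, h2, smul_eq_mul]
  simp only [Function.comp_def, key] at T1
  have hix : ∀ x : ℝ, Integrable (fun v : ℝ => Complex.exp ((v * x : ℝ) * Complex.I) * (h v : ℂ))
      (volume : Measure ℝ) := by
    intro x
    refine (hh.norm.const_mul 1).mono' ?_ ?_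
    · exact ((Complex.continuous_exp.comp (by fun_prop)).aestronglyMeasurable).mul
        (Complex.continuous_ofReal.comp_aestronglyMeasurable hh.1)
    · filter_upwards with v
      rw [norm_mul, Complex.norm_exp_ofReal_mul_I]
      simp
  have hre : ∀ x : ℝ, ∫ v, h v * Real.cos (v * x) =
      (∫ v, Complex.exp ((v * x : ℝ) * Complex.I) * (h v : ℂ)).re := by
    intro x
    rw [show (∫ v : ℝ, Complex.exp ((v * x : ℝ) * Complex.I) * (h v : ℂ)).re
      = RCLike.re (∫ v : ℝ, Complex.exp ((v * x : ℝ) * Complex.I) * (h v : ℂ)) from rfl,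
      ← integral_re (hix x)]
    refine integral_congr_ae (Eventually.of_forall fun v => ?_)
    simp only [RCLike.re_to_complex, Complex.mul_re, Complex.exp_ofReal_mul_I_re,
      Complex.exp_ofReal_mul_I_im, Complex.ofReal_re, Complex.ofReal_im]
    ring
  have him : ∀ x : ℝ, ∫ v, h v * Real.sin (v * x) =
      (∫ v, Complex.exp ((v * x : ℝ) * Complex.I) * (h v : ℂ)).im := by
    intro x
    rw [show (∫ v : ℝ, Complex.exp ((v * x : ℝ) * Complex.I) * (h v : ℂ)).im
      = RCLike.im (∫ v : ℝ, Complex.exp ((v * x : ℝ) * Complex.I) * (h v : ℂ)) from rfl,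
      ← integral_im (hix x)]
    refine integral_congr_ae (Eventually.of_forall fun v => ?_)
    simp only [RCLike.im_to_complex, Complex.mul_im, Complex.exp_ofReal_mul_I_re,
      Complex.exp_ofReal_mul_I_im, Complex.ofReal_re, Complex.ofReal_im]
    ring
  constructor
  · have := (Complex.continuous_re.tendsto 0).comp T1
    simp only [Function.comp_def, Complex.zero_re] at this
    exact (funext hre : _) ▸ this
  · have := (Complex.continuous_im.tendsto 0).comp T1
    simp only [Function.comp_def, Complex.zero_im] at this
    exact (funext him : _) ▸ this
/-- The clamped biharmonic heat kernel on the half-line. -/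
noncomputable def K (t x y : ℝ) : ℝ :=
  (1 / Real.pi) * ∫ k in Set.Ioi (0:ℝ), Real.exp (-k ^ 4 * t) * Phi (k * x) * Phi (k * y)

lemma continuous_PhiD (n : ℕ) : Continuous (PhiD n) := by
  unfold PhiD; fun_prop

lemma continuous_Phi : Continuous Phi := by
  unfold Phi; fun_prop

lemma norm_helper1 (a b c : ℝ) (hb : 0 ≤ b) : ‖a * (b * c)‖ = |a| * (b * |c|) := by
  rw [Real.norm_eq_abs, abs_mul, abs_mul, abs_of_nonneg hb]

lemma norm_abs_mul (a b : ℝ) (hb : 0 ≤ b) : ‖|a| * b‖ = |a| * b := by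
  rw [Real.norm_eq_abs, abs_mul, abs_abs, abs_of_nonneg hb]

lemma norm_helper4 (a b c : ℝ) (hb : 0 ≤ b) : ‖a * b * c‖ = |a| * b * |c| := by
  rw [Real.norm_eq_abs, abs_mul, abs_mul, abs_of_nonneg hb]

lemma abs_neg_one_pow_mul_exp (mm : ℕ) (r : ℝ) : |(-1:ℝ) ^ mm * Real.exp r| = Real.exp r := by
  rw [abs_mul, abs_pow, abs_neg, abs_one, one_pow, one_mul, Real.abs_exp]

lemma key (f : ℝ → ℝ) (hf_int : IntegrableOn f (Set.Ioi 0))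
    (t : ℝ) (ht : 0 < t) (m : ℕ) :
    Tendsto (fun x => iteratedDeriv m (fun z : ℝ => ∫ y in Ioi (0:ℝ), K t z y * f y) x)
      atTop (𝓝 0) := by
  set μ : Measure ℝ := volume.restrict (Ioi 0) with hμ
  set H : ℝ → ℝ → ℝ := fun k y => Real.exp (-k ^ 4 * t) * Phi (k * y) * f y with hH
  have hfm : AEStronglyMeasurable f μ := hf_int.1
  have hHm : AEStronglyMeasurable (Function.uncurry H) (μ.prod μ) := by
    have hc : Continuous (fun p : ℝ × ℝ => Real.exp (-p.1 ^ 4 * t) * Phi (p.1 * p.2)) := by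
      unfold Phi; fun_prop
    have := hc.aestronglyMeasurable.mul (hfm.comp_quasiMeasurePreserving (Measure.quasiMeasurePreserving_snd (μ := μ) (ν := μ)))
    exact this.congr (Eventually.of_forall fun p => by simp [hH, Function.uncurry, mul_assoc])
  have haefull : ∀ᵐ p : ℝ × ℝ ∂(μ.prod μ), 0 < p.1 ∧ 0 < p.2 := by
    rw [hμ, Measure.prod_restrict]
    filter_upwards [ae_restrict_mem (measurableSet_Ioi.prod measurableSet_Ioi)] with p hp
    exact ⟨hp.1, hp.2⟩
  have hexp : ∀ n : ℕ, IntegrableOn (fun k : ℝ => k ^ n * Real.exp (-k ^ 4 * t)) (Ioi 0) :=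
    integrable_pow_exp ht
  have hexp0 : IntegrableOn (fun k : ℝ => Real.exp (-k ^ 4 * t)) (Ioi 0) :=
    (hexp 0).congr_fun (fun k _ => by simp) measurableSet_Ioi
  have hH_int : Integrable (Function.uncurry H) (μ.prod μ) := by
    refine Integrable.mono' (g := fun p => 3 * Real.exp (-p.1 ^ 4 * t) * |f p.2|) ?_ hHm ?_
    · have := ((hexp0.const_mul 3).mul_prod hf_int.abs)
      exact this.congr (Eventually.of_forall fun p => by ring_nf)
    · filter_upwards [haefull] with p hp
      have h1 : |Phi (p.1 * p.2)| ≤ 3 := abs_Phi_le (mul_nonneg hp.1.le hp.2.le)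
      have h2 : (0:ℝ) < Real.exp (-p.1 ^ 4 * t) := Real.exp_pos _
      calc ‖Function.uncurry H p‖
          = Real.exp (-p.1 ^ 4 * t) * |Phi (p.1 * p.2)| * |f p.2| := by
            simp [hH, Function.uncurry, abs_mul, abs_of_pos h2]
        _ ≤ Real.exp (-p.1 ^ 4 * t) * 3 * |f p.2| := by gcongr
        _ = 3 * Real.exp (-p.1 ^ 4 * t) * |f p.2| := by ring
  set G : ℝ → ℝ := fun k => ∫ y in Ioi (0:ℝ), H k y with hG
  set g : ℝ → ℝ := fun k => (1 / Real.pi) * G k with hg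
  have hG_int : Integrable G μ := hH_int.integral_prod_left
  have hg_int : Integrable g μ := hG_int.const_mul _
  set I1 : ℝ := ∫ y in Ioi (0:ℝ), |f y| with hI1
  set C : ℝ := (1 / Real.pi) * (3 * I1) with hC
  have hgb : ∀ k : ℝ, 0 ≤ k → |g k| ≤ C * Real.exp (-k ^ 4 * t) := by
    intro k hk
    have hGb : |G k| ≤ 3 * Real.exp (-k ^ 4 * t) * I1 := by
      calc |G k| ≤ ∫ y in Ioi (0:ℝ), ‖H k y‖ := by
            rw [← Real.norm_eq_abs]
            exact norm_integral_le_integral_norm _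
        _ ≤ ∫ y in Ioi (0:ℝ), 3 * Real.exp (-k ^ 4 * t) * |f y| := by
            refine integral_mono_of_nonneg (Eventually.of_forall fun y => norm_nonneg _)
              ((hf_int.abs.const_mul _)) ?_
            filter_upwards [ae_restrict_mem measurableSet_Ioi] with y hy
            have h1 : |Phi (k * y)| ≤ 3 := abs_Phi_le (mul_nonneg hk (le_of_lt hy))
            have h2 : (0:ℝ) < Real.exp (-k ^ 4 * t) := Real.exp_pos _
            calc ‖H k y‖ = Real.exp (-k ^ 4 * t) * |Phi (k * y)| * |f y| := by
                  simp [hH, abs_mul, abs_of_pos h2]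
              _ ≤ Real.exp (-k ^ 4 * t) * 3 * |f y| := by gcongr
              _ = 3 * Real.exp (-k ^ 4 * t) * |f y| := by ring
        _ = 3 * Real.exp (-k ^ 4 * t) * I1 := by rw [integral_const_mul]
    have hπ : (0:ℝ) < 1 / Real.pi := by positivity
    calc |g k| = (1 / Real.pi) * |G k| := by
          rw [hg, abs_mul, abs_of_pos hπ]
      _ ≤ (1 / Real.pi) * (3 * Real.exp (-k ^ 4 * t) * I1) := by gcongr
      _ = C * Real.exp (-k ^ 4 * t) := by rw [hC]; ring
  have hgpow : ∀ n : ℕ, Integrable (fun k => |g k| * k ^ n) μ := by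
    intro n
    refine Integrable.mono' (g := fun k => C * (k ^ n * Real.exp (-k ^ 4 * t)))
      ((hexp n).const_mul C)
      (hg_int.1.norm.mul (continuous_pow n).aestronglyMeasurable) ?_
    · filter_upwards [ae_restrict_mem measurableSet_Ioi] with k hk
      have hk0 : (0:ℝ) ≤ k := le_of_lt hk
      rw [norm_abs_mul _ _ (pow_nonneg hk0 n)]
      calc |g k| * k ^ n ≤ (C * Real.exp (-k ^ 4 * t)) * k ^ n := by
            gcongr; exact hgb k hk0
        _ = C * (k ^ n * Real.exp (-k ^ 4 * t)) := by ring
  -- Fubini representation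
  have hrep : ∀ x : ℝ, 0 ≤ x →
      (∫ y in Ioi (0:ℝ), K t x y * f y) = ∫ k in Ioi (0:ℝ), g k * Phi (k * x) := by
    intro x hx
    have hQint : Integrable (fun p : ℝ × ℝ => Phi (p.1 * x) * Function.uncurry H p) (μ.prod μ) := by
      refine Integrable.mono' (g := fun p => 3 * ‖Function.uncurry H p‖)
        (hH_int.norm.const_mul 3) ?_ ?_
      · exact ((continuous_Phi.comp (continuous_fst.mul continuous_const)).aestronglyMeasurable.mul hHm)
      · filter_upwards [haefull] with p hp
        rw [norm_mul]
        exact mul_le_mul_of_nonneg_right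
          (by rw [Real.norm_eq_abs]; exact abs_Phi_le (mul_nonneg hp.1.le hx))
          (norm_nonneg _)
    calc (∫ y in Ioi (0:ℝ), K t x y * f y)
        = ∫ y in Ioi (0:ℝ), (1 / Real.pi) * ∫ k in Ioi (0:ℝ), Phi (k * x) * H k y := by
          refine integral_congr_ae (Eventually.of_forall fun y => ?_)
          show K t x y * f y = (1 / Real.pi) * ∫ k in Ioi (0:ℝ), Phi (k * x) * H k y
          unfold K
          rw [mul_assoc, ← integral_mul_const]
          congr 1
          refine integral_congr_ae (Eventually.of_forall fun k => ?_)
          show Real.exp (-k ^ 4 * t) * Phi (k * x) * Phi (k * y) * f y = Phi (k * x) * H k y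
          simp only [hH]
          ring
      _ = (1 / Real.pi) * ∫ y in Ioi (0:ℝ), ∫ k in Ioi (0:ℝ), Phi (k * x) * H k y :=
          integral_const_mul _ _
      _ = (1 / Real.pi) * ∫ k in Ioi (0:ℝ), ∫ y in Ioi (0:ℝ), Phi (k * x) * H k y := by
          rw [integral_integral_swap (f := fun y k => Phi (k * x) * H k y) hQint.swap]
      _ = ∫ k in Ioi (0:ℝ), g k * Phi (k * x) := by
          rw [← integral_const_mul]
          refine integral_congr_ae (Eventually.of_forall fun k => ?_)
          show (1 / Real.pi) * ∫ y in Ioi (0:ℝ), Phi (k * x) * H k y = g k * Phi (k * x)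
          rw [integral_const_mul]
          simp only [hg, hG]
          ring
  -- the candidate for the iterated derivatives
  set J : ℕ → ℝ → ℝ := fun n x => ∫ k in Ioi (0:ℝ), g k * (k ^ n * PhiD n (k * x)) with hJ
  have hJint : ∀ (n : ℕ) (x : ℝ), 0 ≤ x →
      Integrable (fun k => g k * (k ^ n * PhiD n (k * x))) μ := by
    intro n x hx
    refine Integrable.mono' (g := fun k => |g k| * k ^ n * 3) ((hgpow n).mul_const 3)
      (hg_int.aestronglyMeasurable.mul ?_) ?_
    · exact ((continuous_pow n).mul
        ((continuous_PhiD n).comp (continuous_id.mul continuous_const))).aestronglyMeasurable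
    · filter_upwards [ae_restrict_mem measurableSet_Ioi] with k hk
      have hk0 : (0:ℝ) ≤ k := le_of_lt hk
      calc ‖g k * (k ^ n * PhiD n (k * x))‖ = |g k| * (k ^ n * |PhiD n (k * x)|) :=
            norm_helper1 _ _ _ (pow_nonneg hk0 n)
        _ ≤ |g k| * (k ^ n * 3) := by
            gcongr
            exact abs_PhiD_le n (mul_nonneg hk0 hx)
        _ = |g k| * k ^ n * 3 := by ring
  have hderiv : ∀ n : ℕ, ∀ x : ℝ, 0 < x →
      iteratedDeriv n (fun z : ℝ => ∫ y in Ioi (0:ℝ), K t z y * f y) x = J n x := by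
    intro n
    induction n with
    | zero =>
      intro x hx
      rw [iteratedDeriv_zero, hrep x hx.le]
      refine integral_congr_ae (Eventually.of_forall fun k => ?_)
      show g k * Phi (k * x) = g k * (k ^ 0 * PhiD 0 (k * x))
      rw [PhiD_zero, pow_zero, one_mul]
    | succ n ih =>
      intro x hx
      rw [iteratedDeriv_succ]
      have hev : iteratedDeriv n (fun z : ℝ => ∫ y in Ioi (0:ℝ), K t z y * f y) =ᶠ[𝓝 x] J n := by
        filter_upwards [Ioi_mem_nhds hx] with z hz using ih z hz
      rw [hev.deriv_eq]
      have hball : ∀ z ∈ Metric.ball x (x / 2), 0 < z := by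
        intro z hz
        rw [Metric.mem_ball, Real.dist_eq, abs_sub_lt_iff] at hz
        linarith [hz.2]
      have hd := hasDerivAt_integral_of_dominated_loc_of_deriv_le (μ := μ)
        (F := fun z k => g k * (k ^ n * PhiD n (k * z)))
        (F' := fun z k => g k * (k ^ (n + 1) * PhiD (n + 1) (k * z)))
        (x₀ := x) (s := Metric.ball x (x / 2)) (bound := fun k => |g k| * k ^ (n + 1) * 3)
        (Metric.ball_mem_nhds x (by positivity))
        (Eventually.of_forall fun z => (hg_int.aestronglyMeasurable.mul
          (((continuous_pow n).mul ((continuous_PhiD n).comp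
            (continuous_id.mul continuous_const))).aestronglyMeasurable)))
        (hJint n x hx.le)
        (hg_int.aestronglyMeasurable.mul
          (((continuous_pow (n + 1)).mul ((continuous_PhiD (n + 1)).comp
            (continuous_id.mul continuous_const))).aestronglyMeasurable))
        ?_ ((hgpow (n + 1)).mul_const 3) ?_
      · rw [(hd.2).deriv]
      · filter_upwards [ae_restrict_mem measurableSet_Ioi] with k hk z hz
        have hk0 : (0:ℝ) ≤ k := le_of_lt hk
        have hz0 : (0:ℝ) ≤ z := (hball z hz).le
        calc ‖g k * (k ^ (n + 1) * PhiD (n + 1) (k * z))‖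
            = |g k| * (k ^ (n + 1) * |PhiD (n + 1) (k * z)|) :=
              norm_helper1 _ _ _ (pow_nonneg hk0 _)
          _ ≤ |g k| * (k ^ (n + 1) * 3) := by
              gcongr
              exact abs_PhiD_le _ (mul_nonneg hk0 hz0)
          _ = |g k| * k ^ (n + 1) * 3 := by ring
      · refine Eventually.of_forall fun k => fun z _ => ?_
        have h0 : HasDerivAt (fun z : ℝ => PhiD n (k * z)) (PhiD (n + 1) (k * z) * k) z := by
          have := (hasDerivAt_PhiD n (k * z)).comp z ((hasDerivAt_id z).const_mul k)
          exact this.congr_deriv (by simp)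
        have := (h0.const_mul (k ^ n)).const_mul (g k)
        refine this.congr_deriv ?_
        ring
  -- the limit of J m
  have hgm_int : Integrable (fun k => g k * k ^ m) μ := by
    refine Integrable.mono' (hgpow m) (hg_int.aestronglyMeasurable.mul
      (continuous_pow m).aestronglyMeasurable) ?_
    filter_upwards [ae_restrict_mem measurableSet_Ioi] with k hk
    rw [Real.norm_eq_abs, abs_mul, abs_of_nonneg (pow_nonneg hk.le m : (0:ℝ) ≤ k ^ m)]
  set h0 : ℝ → ℝ := (Ioi (0:ℝ)).indicator (fun k => g k * k ^ m) with hh0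
  have hh0_int : Integrable h0 (volume : Measure ℝ) :=
    (integrable_indicator_iff measurableSet_Ioi).mpr hgm_int
  obtain ⟨Tc, Ts⟩ := riemann_lebesgue h0 hh0_int
  have hind : ∀ (q : ℝ → ℝ) (x : ℝ), (∀ v, |q v| ≤ 1) →
      (∫ v, h0 v * q v) = ∫ k in Ioi (0:ℝ), (g k * k ^ m) * q k := by
    intro q x hq
    rw [← integral_indicator measurableSet_Ioi]
    refine integral_congr_ae (Eventually.of_forall fun v => ?_)
    by_cases hv : v ∈ Ioi (0:ℝ)
    · simp [hh0, Set.indicator_of_mem hv]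
    · simp [hh0, Set.indicator_of_notMem hv]
  have hsin : Tendsto (fun x => ∫ k in Ioi (0:ℝ), (g k * k ^ m) * Real.sin (k * x))
      atTop (𝓝 0) := by
    refine Ts.congr fun x => ?_
    exact hind (fun v => Real.sin (v * x)) x (fun v => Real.abs_sin_le_one _)
  have hcos : Tendsto (fun x => ∫ k in Ioi (0:ℝ), (g k * k ^ m) * Real.cos (k * x))
      atTop (𝓝 0) := by
    refine Tc.congr fun x => ?_
    exact hind (fun v => Real.cos (v * x)) x (fun v => Real.abs_cos_le_one _)
  have hexp_tendsto : Tendsto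
      (fun x => ∫ k in Ioi (0:ℝ), (g k * k ^ m) * ((-1:ℝ) ^ m * Real.exp (-(k * x))))
      atTop (𝓝 0) := by
    have hDC := tendsto_integral_filter_of_dominated_convergence (μ := μ) (l := atTop)
      (F := fun (x : ℝ) (k : ℝ) => (g k * k ^ m) * ((-1:ℝ) ^ m * Real.exp (-(k * x))))
      (f := fun _ => (0:ℝ)) (bound := fun k => |g k| * k ^ m) ?_ ?_ (hgpow m) ?_
    · simpa using hDC
    · refine Eventually.of_forall fun x => hgm_int.aestronglyMeasurable.mul ?_
      exact (continuous_const.mul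
        (Real.continuous_exp.comp (continuous_id.mul continuous_const).neg)).aestronglyMeasurable
    · filter_upwards [eventually_ge_atTop (0:ℝ)] with x hx
      filter_upwards [ae_restrict_mem measurableSet_Ioi] with k hk
      have hk0 : (0:ℝ) ≤ k := le_of_lt hk
      have he : Real.exp (-(k * x)) ≤ 1 := Real.exp_le_one_iff.mpr (by nlinarith)
      have he0 : (0:ℝ) < Real.exp (-(k * x)) := Real.exp_pos _
      calc ‖(g k * k ^ m) * ((-1:ℝ) ^ m * Real.exp (-(k * x)))‖
          = |g k| * k ^ m * |(-1:ℝ) ^ m * Real.exp (-(k * x))| :=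
            norm_helper4 _ _ _ (pow_nonneg hk0 m)
        _ = |g k| * k ^ m * Real.exp (-(k * x)) := by rw [abs_neg_one_pow_mul_exp]
        _ ≤ |g k| * k ^ m * 1 :=
            mul_le_mul_of_nonneg_left he (mul_nonneg (abs_nonneg _) (pow_nonneg hk0 m))
        _ = |g k| * k ^ m := by ring
    · filter_upwards [ae_restrict_mem measurableSet_Ioi] with k hk
      have h1 : Tendsto (fun x : ℝ => k * x) atTop atTop :=
        Tendsto.const_mul_atTop hk tendsto_id
      have h2 : Tendsto (fun x : ℝ => Real.exp (-(k * x))) atTop (𝓝 0) :=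
        Real.tendsto_exp_atBot.comp (tendsto_neg_atTop_atBot.comp h1)
      have h3 := (h2.const_mul ((-1:ℝ) ^ m)).const_mul (g k * k ^ m)
      simpa using h3
  have hsplit : ∀ x : ℝ, 0 ≤ x → J m x =
      (∫ k in Ioi (0:ℝ), (g k * k ^ m) * ((-1:ℝ) ^ m * Real.exp (-(k * x))))
      + ((∫ k in Ioi (0:ℝ), (g k * k ^ m) * Real.sin (k * x)) * (Real.cos ((m : ℝ) * (Real.pi / 2)) + Real.sin ((m : ℝ) * (Real.pi / 2)))
        + (∫ k in Ioi (0:ℝ), (g k * k ^ m) * Real.cos (k * x)) * (Real.sin ((m : ℝ) * (Real.pi / 2)) - Real.cos ((m : ℝ) * (Real.pi / 2)))) := by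
    intro x hx
    have hIe : Integrable (fun k => (g k * k ^ m) * ((-1:ℝ) ^ m * Real.exp (-(k * x)))) μ := by
      refine Integrable.mono' (hgpow m) (hgm_int.aestronglyMeasurable.mul
        ((continuous_const.mul (Real.continuous_exp.comp
          (continuous_id.mul continuous_const).neg)).aestronglyMeasurable)) ?_
      filter_upwards [ae_restrict_mem measurableSet_Ioi] with k hk
      have hk0 : (0:ℝ) ≤ k := le_of_lt hk
      have he : Real.exp (-(k * x)) ≤ 1 := Real.exp_le_one_iff.mpr (by nlinarith)
      have he0 : (0:ℝ) < Real.exp (-(k * x)) := Real.exp_pos _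
      calc ‖(g k * k ^ m) * ((-1:ℝ) ^ m * Real.exp (-(k * x)))‖
          = |g k| * k ^ m * |(-1:ℝ) ^ m * Real.exp (-(k * x))| :=
            norm_helper4 _ _ _ (pow_nonneg hk0 m)
        _ = |g k| * k ^ m * Real.exp (-(k * x)) := by rw [abs_neg_one_pow_mul_exp]
        _ ≤ |g k| * k ^ m * 1 :=
            mul_le_mul_of_nonneg_left he (mul_nonneg (abs_nonneg _) (pow_nonneg hk0 m))
        _ = |g k| * k ^ m := by ring
    have trig_int : ∀ q : ℝ → ℝ, Continuous q → (∀ v, |q v| ≤ 1) →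
        Integrable (fun k => (g k * k ^ m) * q k) μ := by
      intro q hqc hq1
      refine Integrable.mono' (hgpow m)
        (hgm_int.aestronglyMeasurable.mul hqc.aestronglyMeasurable) ?_
      filter_upwards [ae_restrict_mem measurableSet_Ioi] with k hk
      have hk0 : (0:ℝ) ≤ k := le_of_lt hk
      calc ‖(g k * k ^ m) * q k‖ = |g k| * k ^ m * |q k| :=
            norm_helper4 _ _ _ (pow_nonneg hk0 m)
        _ ≤ |g k| * k ^ m * 1 :=
            mul_le_mul_of_nonneg_left (hq1 k) (mul_nonneg (abs_nonneg _) (pow_nonneg hk0 m))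
        _ = |g k| * k ^ m := by ring
    have hIs : Integrable (fun k => ((g k * k ^ m) * Real.sin (k * x)) * (Real.cos ((m : ℝ) * (Real.pi / 2)) + Real.sin ((m : ℝ) * (Real.pi / 2)))) μ :=
      (trig_int (fun v => Real.sin (v * x)) (by fun_prop) (fun v => Real.abs_sin_le_one _)).mul_const _
    have hIc : Integrable (fun k => ((g k * k ^ m) * Real.cos (k * x)) * (Real.sin ((m : ℝ) * (Real.pi / 2)) - Real.cos ((m : ℝ) * (Real.pi / 2)))) μ :=
      (trig_int (fun v => Real.cos (v * x)) (by fun_prop) (fun v => Real.abs_cos_le_one _)).mul_const _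
    calc J m x = ∫ k in Ioi (0:ℝ),
          ((g k * k ^ m) * ((-1:ℝ) ^ m * Real.exp (-(k * x)))
          + (((g k * k ^ m) * Real.sin (k * x)) * (Real.cos ((m : ℝ) * (Real.pi / 2)) + Real.sin ((m : ℝ) * (Real.pi / 2)))
            + ((g k * k ^ m) * Real.cos (k * x)) * (Real.sin ((m : ℝ) * (Real.pi / 2)) - Real.cos ((m : ℝ) * (Real.pi / 2))))) := by
          refine integral_congr_ae (Eventually.of_forall fun k => ?_)
          show g k * (k ^ m * PhiD m (k * x)) = _
          rw [PhiD, Real.sin_add, Real.cos_add]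
          push_cast
          ring
      _ = _ := by
          have hIsc : Integrable (fun k => ((g k * k ^ m) * Real.sin (k * x)) * (Real.cos ((m : ℝ) * (Real.pi / 2)) + Real.sin ((m : ℝ) * (Real.pi / 2)))
              + ((g k * k ^ m) * Real.cos (k * x)) * (Real.sin ((m : ℝ) * (Real.pi / 2)) - Real.cos ((m : ℝ) * (Real.pi / 2)))) μ := hIs.add hIc
          rw [integral_add hIe hIsc, integral_add hIs hIc,
            integral_mul_const, integral_mul_const]
  have hJlim : Tendsto (fun x => J m x) atTop (𝓝 0) := by
    have := hexp_tendsto.add ((hsin.mul_const (Real.cos ((m : ℝ) * (Real.pi / 2)) + Real.sin ((m : ℝ) * (Real.pi / 2)))).add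
      (hcos.mul_const (Real.sin ((m : ℝ) * (Real.pi / 2)) - Real.cos ((m : ℝ) * (Real.pi / 2)))))
    rw [show (0:ℝ) = 0 + (0 * (Real.cos ((m : ℝ) * (Real.pi / 2)) + Real.sin ((m : ℝ) * (Real.pi / 2))) + 0 * (Real.sin ((m : ℝ) * (Real.pi / 2)) - Real.cos ((m : ℝ) * (Real.pi / 2)))) by ring]
    refine Tendsto.congr' ?_ this
    filter_upwards [eventually_ge_atTop (0:ℝ)] with x hx
    exact (hsplit x hx).symm
  refine Tendsto.congr' ?_ hJlim
  filter_upwards [eventually_gt_atTop (0:ℝ)] with x hx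
  exact (hderiv m x hx).symm

/-- every spatial derivative of `u(t,x) = ∫₀^∞ K(t,x,y) f(y) dy`
decays at infinity for each fixed `t > 0`. -/
theorem stmt3 (f : ℝ → ℝ)
    (hf_cont : ContinuousOn f (Set.Ici 0))
    (hf_bdd : ∃ M, ∀ x ≥ (0:ℝ), |f x| ≤ M)
    (hf_int : IntegrableOn f (Set.Ioi 0))
    (u : ℝ → ℝ → ℝ)
    (hu : ∀ t x, u t x = ∫ y in Set.Ioi (0:ℝ), K t x y * f y) :
    ∀ t > (0:ℝ), ∀ m : ℕ,
      Tendsto (fun x => iteratedDeriv m (fun z => u t z) x) atTop (nhds 0) := by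
  intro t ht m
  have h : (fun z => u t z) = fun z : ℝ => ∫ y in Set.Ioi (0:ℝ), K t z y * f y :=
    funext fun z => hu t z
  rw [h]
  exact key f hf_int t ht m
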